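/- In the Petersen graph, every two distinct vertices have distance at most two, and every two nonadjacent vertices s,t are linked: there are two induced paths between s and t, both of length at least three, whose lengths have different parity. -/

import Mathlib

open SimpleGraph

variable {V : Type*}

/-- A walk is an *induced (chordless) path* if it is a path and every edge of `G` joining
two of its vertices is an edge of the path. -/
def IsIndPath (G : SimpleGraph V) {u v : V} (p : G.Walk u v) : Prop :=
  p.IsPath ∧ ∀ x ∈ p.support, ∀ y ∈ p.support, G.Adj x y → s(x, y) ∈ p.edges

/-- The interior (set of internal vertices) of a walk from `u` to `v`. -/
def interiorSet {G : SimpleGraph V} {u v : V} (p : G.Walk u v) : Set V :=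
  {x | x ∈ p.support ∧ x ≠ u ∧ x ≠ v}

/-- An *induced cycle*: a cycle such that every edge of `G` joining two of its vertices is an
edge of the cycle. -/
def IsIndCycle (G : SimpleGraph V) {u : V} (c : G.Walk u u) : Prop :=
  c.IsCycle ∧ ∀ x ∈ c.support, ∀ y ∈ c.support, G.Adj x y → s(x, y) ∈ c.edges

/-- A *pentagraph*: every cycle has length at least five, and every induced cycle of odd
length has length exactly five. -/
def IsPentagraph (G : SimpleGraph V) : Prop :=
  (∀ (u : V) (c : G.Walk u u), c.IsCycle → 5 ≤ c.length) ∧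
  (∀ (u : V) (c : G.Walk u u), IsIndCycle G c → Odd c.length → c.length = 5)

/-- Removing the vertex set `X` disconnects `G`: two vertices outside `X` are not joined by
any path avoiding `X`. -/
def RemovalDisconnects (G : SimpleGraph V) (X : Set V) : Prop :=
  ∃ a b : ↥(Xᶜ), ¬ (G.induce Xᶜ).Reachable a b

/-- `G` admits a `P₃`-cutset: an induced three-vertex path whose deletion disconnects `G`. -/
def HasP3Cutset (G : SimpleGraph V) : Prop :=
  ∃ v₁ v₂ v₃ : V, G.Adj v₁ v₂ ∧ G.Adj v₂ v₃ ∧ ¬ G.Adj v₁ v₃ ∧ v₁ ≠ v₃ ∧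
    RemovalDisconnects G ({v₁, v₂, v₃} : Set V)

/-- `A` is (the vertex set of) a connected component of `G ∖ X`. -/
def IsCompOf (G : SimpleGraph V) (X : Set V) (A : Set V) : Prop :=
  A.Nonempty ∧ A ⊆ Xᶜ ∧ (G.induce A).Connected ∧
    ∀ u ∈ A, ∀ w ∈ Xᶜ, G.Adj u w → w ∈ A

/-- `G` admits a strong parity star-cutset. -/
def HasStrongParityStarCutset (G : SimpleGraph V) : Prop :=
  ∃ X : Set V, RemovalDisconnects G X ∧
    ∃ x ∈ X, (∀ y ∈ X, y ≠ x → G.Adj x y) ∧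
      ∃ A : Set V, IsCompOf G X A ∧
        (∀ y ∈ X, y ≠ x → ∀ z ∈ X, z ≠ x → y ≠ z →
          ∃ p : G.Walk y z, IsIndPath G p ∧ Even p.length ∧ interiorSet p ⊆ A) ∧
        (∃ a ∈ A, G.Adj x a)

/-- `G` admits a clique cutset. -/
def HasCliqueCutset (G : SimpleGraph V) : Prop :=
  ∃ X : Set V, G.IsClique X ∧ RemovalDisconnects G X

/-- Vertices of the Petersen graph: 2-element subsets of a 5-element set. -/
abbrev KVert : Type := {s : Finset (Fin 5) // s.card = 2}

/-- The Petersen graph, as the Kneser graph on 2-element subsets of a 5-element set. -/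
def petersen : SimpleGraph KVert where
  Adj a b := Disjoint (a : Finset (Fin 5)) (b : Finset (Fin 5))
  symm := ⟨fun a b h => h.symm⟩
  loopless := by
    refine ⟨fun a h => ?_⟩
    have h : Disjoint (a : Finset (Fin 5)) (a : Finset (Fin 5)) := h
    rw [disjoint_self] at h
    have h2 := a.2
    simp [h] at h2

def pA : KVert := ⟨{0, 1}, by decide⟩
def pB : KVert := ⟨{2, 3}, by decide⟩

/-- The Petersen graph minus one edge. -/
def petersen0 : SimpleGraph KVert := petersen.deleteEdges {s(pA, pB)}

/-- The Petersen graph minus one vertex. -/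
def petersen1 : SimpleGraph {x : KVert // x ≠ pA} := petersen.induce {x : KVert | x ≠ pA}

/-- The Petersen graph minus two adjacent vertices. -/
def petersen2 : SimpleGraph {x : KVert // x ≠ pA ∧ x ≠ pB} :=
  petersen.induce {x : KVert | x ≠ pA ∧ x ≠ pB}

/-- Two nonadjacent vertices are *linked*: joined by two induced paths, both of length at
least three, of different parity. -/
def Linked (H : SimpleGraph V) (s t : V) : Prop :=
  ∃ (p q : H.Walk s t), IsIndPath H p ∧ IsIndPath H q ∧
    3 ≤ p.length ∧ 3 ≤ q.length ∧ p.length % 2 ≠ q.length % 2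

/-- Two vertices are *odd-linked*: joined by an induced path of odd length at least five. -/
def OddLinked (H : SimpleGraph V) (s t : V) : Prop :=
  ∃ p : H.Walk s t, IsIndPath H p ∧ Odd p.length ∧ 5 ≤ p.length

/-- A *jump* over a hole with vertex set `C`: an induced path whose ends are distinct,
nonadjacent vertices of `C` and whose other vertices avoid `C`. -/
def IsJump (G : SimpleGraph V) (C : Set V) {s t : V} (P : G.Walk s t) : Prop :=
  IsIndPath G P ∧ s ∈ C ∧ t ∈ C ∧ s ≠ t ∧ ¬ G.Adj s t ∧
    ∀ x ∈ P.support, x ∈ C → x = s ∨ x = t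

/-- A jump *across* the vertex `c` of `C`. -/
def IsJumpAcross (G : SimpleGraph V) (C : Set V) {s t : V} (P : G.Walk s t) (c : V) : Prop :=
  IsJump G C P ∧ c ∈ C ∧ G.Adj c s ∧ G.Adj c t

/-- A *local* jump: no vertex of `C` other than `c, s, t` has a neighbour in the interior. -/
def IsLocalJump (G : SimpleGraph V) (C : Set V) {s t : V} (P : G.Walk s t) : Prop :=
  IsJump G C P ∧ ∃ c : V, c ∈ C ∧ G.Adj c s ∧ G.Adj c t ∧
    ∀ x ∈ C, x ≠ c → x ≠ s → x ≠ t → ∀ y ∈ interiorSet P, ¬ G.Adj x y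

/-- A *short* jump: a jump of length three. -/
def IsShortJump (G : SimpleGraph V) (C : Set V) {s t : V} (P : G.Walk s t) : Prop :=
  IsJump G C P ∧ P.length = 3

/-- `G` is three-connected. -/
def ThreeConnected (G : SimpleGraph V) : Prop :=
  4 ≤ Nat.card V ∧ ∀ S : Set V, S.ncard < 3 → (G.induce Sᶜ).Connected


/-! ### Auxiliary machinery for the proof -/

section PetersenAux

def mkv (x y : Fin 5) (h : x ≠ y) : KVert := ⟨{x, y}, Finset.card_pair h⟩

lemma adj_mkv {x y u v : Fin 5} {h : x ≠ y} {h' : u ≠ v}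
    (h1 : x ≠ u) (h2 : x ≠ v) (h3 : y ≠ u) (h4 : y ≠ v) :
    petersen.Adj (mkv x y h) (mkv u v h') := by
  show Disjoint ({x, y} : Finset (Fin 5)) {u, v}
  simp [Finset.disjoint_left, h1, h2, h3, h4]

lemma nadj_mkv {x y u v : Fin 5} {h : x ≠ y} {h' : u ≠ v}
    (hc : x = u ∨ x = v ∨ y = u ∨ y = v) :
    ¬ petersen.Adj (mkv x y h) (mkv u v h') := by
  show ¬ Disjoint ({x, y} : Finset (Fin 5)) {u, v}
  rw [Finset.not_disjoint_iff]
  rcases hc with rfl | rfl | rfl | rfl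
  · exact ⟨x, by simp, by simp⟩
  · exact ⟨x, by simp, by simp⟩
  · exact ⟨y, by simp, by simp⟩
  · exact ⟨y, by simp, by simp⟩

lemma ne_mkv {x y u v : Fin 5} {h : x ≠ y} {h' : u ≠ v}
    (hc : (x ≠ u ∧ x ≠ v) ∨ (y ≠ u ∧ y ≠ v)) :
    mkv x y h ≠ mkv u v h' := by
  intro he
  have he' : ({x, y} : Finset (Fin 5)) = {u, v} := congrArg Subtype.val he
  rcases hc with ⟨h1, h2⟩ | ⟨h1, h2⟩
  · have : x ∈ ({u, v} : Finset (Fin 5)) := he' ▸ (by simp)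
    simp [h1, h2] at this
  · have : y ∈ ({u, v} : Finset (Fin 5)) := he' ▸ (by simp)
    simp [h1, h2] at this

lemma petersen_extract (s t : KVert) (hst : s ≠ t) (h : ¬ petersen.Adj s t) :
    ∃ (a b c d e : Fin 5) (hab : a ≠ b) (hbc : b ≠ c),
      a ≠ c ∧ a ≠ d ∧ a ≠ e ∧ b ≠ d ∧ b ≠ e ∧ c ≠ d ∧ c ≠ e ∧ d ≠ e ∧
      s = mkv a b hab ∧ t = mkv b c hbc := by
  have hnd : ¬ Disjoint (s : Finset (Fin 5)) (t : Finset (Fin 5)) := h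
  obtain ⟨b, hbs, hbt⟩ := Finset.not_disjoint_iff.mp hnd
  obtain ⟨x, y, hxy, hs⟩ := Finset.card_eq_two.mp s.2
  obtain ⟨u, v, huv, ht⟩ := Finset.card_eq_two.mp t.2
  obtain ⟨a, hab, hs'⟩ : ∃ a : Fin 5, a ≠ b ∧ (s : Finset (Fin 5)) = {a, b} := by
    rw [hs] at hbs; simp at hbs
    rcases hbs with rfl | rfl
    · exact ⟨y, hxy.symm, by rw [hs, Finset.pair_comm]⟩
    · exact ⟨x, hxy, hs⟩
  obtain ⟨c, hcb, ht'⟩ : ∃ c : Fin 5, c ≠ b ∧ (t : Finset (Fin 5)) = {b, c} := by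
    rw [ht] at hbt; simp at hbt
    rcases hbt with rfl | rfl
    · exact ⟨v, huv.symm, ht⟩
    · exact ⟨u, huv, by rw [ht, Finset.pair_comm]⟩
  have hac : a ≠ c := by
    rintro rfl
    apply hst
    apply Subtype.ext
    rw [hs', ht', Finset.pair_comm]
  have hcard : ({a, b, c} : Finset (Fin 5)).card = 3 := by
    rw [Finset.card_insert_of_notMem (by simp [hab, hac]),
        Finset.card_insert_of_notMem (by simp [hcb.symm]), Finset.card_singleton]
  have hccard : (({a, b, c} : Finset (Fin 5))ᶜ).card = 2 := by
    rw [Finset.card_compl, hcard]; rfl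
  obtain ⟨d, e, hde, hcomp⟩ := Finset.card_eq_two.mp hccard
  have hd : d ∉ ({a, b, c} : Finset (Fin 5)) := by
    rw [← Finset.mem_compl, hcomp]; simp
  have he : e ∉ ({a, b, c} : Finset (Fin 5)) := by
    rw [← Finset.mem_compl, hcomp]; simp
  simp only [Finset.mem_insert, Finset.mem_singleton, not_or] at hd he
  exact ⟨a, b, c, d, e, hab, hcb.symm, hac, (Ne.symm hd.1), (Ne.symm he.1),
    (Ne.symm hd.2.1), (Ne.symm he.2.1), (Ne.symm hd.2.2), (Ne.symm he.2.2), hde,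
    Subtype.ext hs', Subtype.ext ht'⟩

lemma indPath3 {G : SimpleGraph V} {s a b t : V}
    (h1 : G.Adj s a) (h2 : G.Adj a b) (h3 : G.Adj b t)
    (n1 : ¬G.Adj s b) (n2 : ¬G.Adj s t) (n3 : ¬G.Adj a t)
    (d1 : s ≠ b) (d2 : s ≠ t) (d3 : a ≠ t) :
    IsIndPath G (Walk.cons h1 (Walk.cons h2 (Walk.cons h3 Walk.nil))) := by
  constructor
  · rw [Walk.isPath_def]
    simp [h1.ne, h2.ne, h3.ne, d1, d2, d3]
  · intro x hx y hy hxy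
    simp only [Walk.support_cons, Walk.support_nil, List.mem_cons, List.mem_singleton,
      List.not_mem_nil, or_false] at hx hy
    simp only [Walk.edges_cons, Walk.edges_nil, List.mem_cons, List.not_mem_nil, or_false]
    rcases hx with rfl | rfl | rfl | rfl <;> rcases hy with rfl | rfl | rfl | rfl <;>
      first
        | exact absurd hxy (G.loopless.irrefl _)
        | exact absurd hxy n1 | exact absurd hxy n2 | exact absurd hxy n3
        | exact absurd hxy.symm n1 | exact absurd hxy.symm n2 | exact absurd hxy.symm n3
        | simp [Sym2.eq_swap]

lemma indPath4 {G : SimpleGraph V} {s a b c t : V}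
    (h1 : G.Adj s a) (h2 : G.Adj a b) (h3 : G.Adj b c) (h4 : G.Adj c t)
    (n1 : ¬G.Adj s b) (n2 : ¬G.Adj s c) (n3 : ¬G.Adj s t)
    (n4 : ¬G.Adj a c) (n5 : ¬G.Adj a t) (n6 : ¬G.Adj b t)
    (d1 : s ≠ b) (d2 : s ≠ c) (d3 : s ≠ t) (d4 : a ≠ c) (d5 : a ≠ t) (d6 : b ≠ t) :
    IsIndPath G (Walk.cons h1 (Walk.cons h2 (Walk.cons h3 (Walk.cons h4 Walk.nil)))) := by
  constructor
  · rw [Walk.isPath_def]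
    simp [h1.ne, h2.ne, h3.ne, h4.ne, d1, d2, d3, d4, d5, d6]
  · intro x hx y hy hxy
    simp only [Walk.support_cons, Walk.support_nil, List.mem_cons, List.mem_singleton,
      List.not_mem_nil, or_false] at hx hy
    simp only [Walk.edges_cons, Walk.edges_nil, List.mem_cons, List.not_mem_nil, or_false]
    rcases hx with rfl | rfl | rfl | rfl | rfl <;> rcases hy with rfl | rfl | rfl | rfl | rfl <;>
      first
        | exact absurd hxy (G.loopless.irrefl _)
        | exact absurd hxy n1 | exact absurd hxy n2 | exact absurd hxy n3
        | exact absurd hxy n4 | exact absurd hxy n5 | exact absurd hxy n6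
        | exact absurd hxy.symm n1 | exact absurd hxy.symm n2 | exact absurd hxy.symm n3
        | exact absurd hxy.symm n4 | exact absurd hxy.symm n5 | exact absurd hxy.symm n6
        | simp [Sym2.eq_swap]

end PetersenAux

/-- in the Petersen graph, all distances are at most two and every two
nonadjacent vertices are linked. -/
theorem petersen_distances_and_linked :
    (∀ s t : KVert, s ≠ t → petersen.dist s t ≤ 2) ∧
    (∀ s t : KVert, s ≠ t → ¬ petersen.Adj s t → Linked petersen s t)  := by
  constructor
  · intro s t hst
    by_cases h : petersen.Adj s t
    · have := SimpleGraph.dist_le (Walk.cons h Walk.nil)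
      simpa using this.trans (by norm_num)
    · obtain ⟨a, b, c, d, e, hab, hbc, hac, had, hae, hbd, hbe, hcd, hce, hde, rfl, rfl⟩ :=
        petersen_extract s t hst h
      refine le_trans (SimpleGraph.dist_le
        (Walk.cons (adj_mkv (h' := hde) had hae hbd hbe)
          (Walk.cons (adj_mkv (h := hde) hbd.symm hcd.symm hbe.symm hce.symm) Walk.nil))) ?_
      simp
  · intro s t hst h
    obtain ⟨a, b, c, d, e, hab, hbc, hac, had, hae, hbd, hbe, hcd, hce, hde, rfl, rfl⟩ :=
      petersen_extract s t hst h
    -- P3 : {a,b} - {c,d} - {a,e} - {b,c}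
    have p1 : petersen.Adj (mkv a b hab) (mkv c d hcd) := adj_mkv hac had hbc hbd
    have p2 : petersen.Adj (mkv c d hcd) (mkv a e hae) := adj_mkv hac.symm hce had.symm hde
    have p3 : petersen.Adj (mkv a e hae) (mkv b c hbc) := adj_mkv hab hac hbe.symm hce.symm
    -- P4 : {a,b} - {c,d} - {b,e} - {a,d} - {b,c}
    have q2 : petersen.Adj (mkv c d hcd) (mkv b e hbe) := adj_mkv hbc.symm hce hbd.symm hde
    have q3 : petersen.Adj (mkv b e hbe) (mkv a d had) := adj_mkv hab.symm hbd hae.symm hde.symm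
    have q4 : petersen.Adj (mkv a d had) (mkv b c hbc) := adj_mkv hab hac hbd.symm hcd.symm
    refine ⟨Walk.cons p1 (Walk.cons p2 (Walk.cons p3 Walk.nil)),
      Walk.cons p1 (Walk.cons q2 (Walk.cons q3 (Walk.cons q4 Walk.nil))), ?_, ?_, ?_, ?_, ?_⟩
    · exact indPath3 p1 p2 p3
        (nadj_mkv (Or.inl rfl)) (nadj_mkv (Or.inr (Or.inr (Or.inl rfl))))
        (nadj_mkv (Or.inr (Or.inl rfl)))
        (ne_mkv (Or.inr ⟨hab.symm, hbe⟩)) hst (ne_mkv (Or.inr ⟨hbd.symm, hcd.symm⟩))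
    · exact indPath4 p1 q2 q3 q4
        (nadj_mkv (Or.inr (Or.inr (Or.inl rfl)))) (nadj_mkv (Or.inl rfl))
        (nadj_mkv (Or.inr (Or.inr (Or.inl rfl)))) (nadj_mkv (Or.inr (Or.inr (Or.inr rfl))))
        (nadj_mkv (Or.inr (Or.inl rfl))) (nadj_mkv (Or.inl rfl))
        (ne_mkv (Or.inl ⟨hab, hae⟩)) (ne_mkv (Or.inr ⟨hab.symm, hbd⟩)) hst
        (ne_mkv (Or.inl ⟨hac.symm, hcd⟩)) (ne_mkv (Or.inr ⟨hbd.symm, hcd.symm⟩))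
        (ne_mkv (Or.inr ⟨hbe.symm, hce.symm⟩))
    · simp
    · simp
    · simp
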